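/- Let ρ be a probability vector (diagonal density matrix eigenvalues) and let ρ' be obtained from ρ by a measurement that sets all but m of the n nonzero eigenvalue positions to zero and renormalizes: ρ'_i = ρ_i / Σ_{j∈S} ρ_j for i in a subset S of size m containing the m largest entries of ρ, ρ'_i = 0 otherwise. Then ρ ≺ ρ'. -/

import Mathlib

open ComplexOrder

/-- Ascending rearrangement of a finite real tuple. -/
noncomputable def sortAsc {n : ℕ} (f : Fin n → ℝ) : Fin n → ℝ := f ∘ Tuple.sort f

/-- Descending rearrangement. -/
noncomputable def sortDesc {n : ℕ} (f : Fin n → ℝ) : Fin n → ℝ := fun i => sortAsc f i.rev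

/-- Sum of the `k` largest entries of `f`. -/
noncomputable def topSum {n : ℕ} (f : Fin n → ℝ) (k : ℕ) : ℝ :=
  ∑ i ∈ Finset.univ.filter (fun i : Fin n => (i : ℕ) < k), sortDesc f i

/-- `Majorizes q p` means `p ≺ q`. -/
def Majorizes {n : ℕ} (q p : Fin n → ℝ) : Prop :=
  (∀ k, topSum p k ≤ topSum q k) ∧ (∑ i, p i = ∑ i, q i)

/-- Battery capacity from eigenvalue vector `lam` and energy levels `eps`. -/
noncomputable def capacityVec {n : ℕ} (lam eps : Fin n → ℝ) : ℝ :=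
  ∑ i, sortAsc eps i * (sortAsc lam i - sortAsc lam i.rev)

lemma sortDesc_antitone {n : ℕ} (f : Fin n → ℝ) : Antitone (sortDesc f) := by
  intro i j h
  exact Tuple.monotone_sort f (Fin.rev_le_rev.2 h)

lemma sortDesc_nonneg {n : ℕ} (f : Fin n → ℝ) (hnn : ∀ i, 0 ≤ f i) (i : Fin n) :
    0 ≤ sortDesc f i := hnn _

lemma strictMono_val_le {c n : ℕ} {e : Fin c → Fin n} (he : StrictMono e) (j : Fin c) :
    (j : ℕ) ≤ (e j : ℕ) := by
  have key : ∀ v : ℕ, ∀ j : Fin c, (j : ℕ) = v → v ≤ (e j : ℕ) := by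
    intro v
    induction v with
    | zero => intro j _; exact Nat.zero_le _
    | succ v ih =>
      intro j hj
      have hv : v < c := by omega
      have h1 : v ≤ (e ⟨v, hv⟩ : ℕ) := ih ⟨v, hv⟩ rfl
      have h2 : e ⟨v, hv⟩ < e j := he (by simp [Fin.lt_def, hj])
      have := Fin.lt_def.1 h2
      omega
  exact key _ j rfl

lemma filter_lt_eq_image (n k : ℕ) :
    (Finset.univ.filter fun i : Fin n => (i : ℕ) < k)
      = Finset.univ.image (Fin.castLE (min_le_right k n) : Fin (min k n) → Fin n) := by
  ext i
  simp only [Finset.mem_filter, Finset.mem_univ, true_and, Finset.mem_image]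
  constructor
  · intro h
    exact ⟨⟨i, lt_min h i.isLt⟩, rfl⟩
  · rintro ⟨j, rfl⟩
    exact lt_of_lt_of_le j.isLt (min_le_left _ _)

lemma card_filter_lt (n k : ℕ) :
    (Finset.univ.filter fun i : Fin n => (i : ℕ) < k).card = min k n := by
  rw [filter_lt_eq_image, Finset.card_image_of_injective _ (Fin.castLE_injective _)]
  simp

lemma sum_filter_lt {n : ℕ} (k : ℕ) (g : Fin n → ℝ) :
    ∑ i ∈ Finset.univ.filter (fun i : Fin n => (i : ℕ) < k), g i
      = ∑ j : Fin (min k n), g (Fin.castLE (min_le_right k n) j) := by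
  rw [filter_lt_eq_image, Finset.sum_image]
  intro a _ b _ h
  exact Fin.castLE_injective _ h

/-- sum over any `B` with `B.card ≤ k` of an antitone nonneg `g` is at most the
sum of the first `k` values. -/
lemma sum_le_sum_first {n k : ℕ} (g : Fin n → ℝ) (hg : Antitone g)
    (hnn : ∀ i, 0 ≤ g i) (B : Finset (Fin n)) (hB : B.card ≤ k) :
    ∑ i ∈ B, g i ≤ ∑ i ∈ Finset.univ.filter (fun i : Fin n => (i : ℕ) < k), g i := by
  set c := B.card with hc
  have hcn : c ≤ n := le_trans (Finset.card_le_univ B) (by simp)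
  have e := B.orderEmbOfFin hc.symm
  have hBe : B = Finset.univ.image (B.orderEmbOfFin hc.symm) := by
    ext i
    simp only [Finset.mem_image, Finset.mem_univ, true_and]
    constructor
    · intro hi
      have := (Finset.range_orderEmbOfFin B hc.symm)
      have : i ∈ Set.range (B.orderEmbOfFin hc.symm) := by rw [this]; exact hi
      obtain ⟨j, hj⟩ := this
      exact ⟨j, hj⟩
    · rintro ⟨j, rfl⟩
      exact Finset.orderEmbOfFin_mem _ _ _
  calc ∑ i ∈ B, g i = ∑ j : Fin c, g (B.orderEmbOfFin hc.symm j) := by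
        conv_lhs => rw [hBe]
        rw [Finset.sum_image (by intro a _ b _ h; exact (B.orderEmbOfFin hc.symm).injective h)]
    _ ≤ ∑ j : Fin c, g (Fin.castLE hcn j) := by
        apply Finset.sum_le_sum
        intro j _
        apply hg
        have := strictMono_val_le (B.orderEmbOfFin hc.symm).strictMono j
        exact Fin.le_def.2 (by simpa using this)
    _ = ∑ i ∈ Finset.univ.filter (fun i : Fin n => (i : ℕ) < c), g i := by
        rw [sum_filter_lt]
        have hmin : min c n = c := min_eq_left hcn
        rw [← Fin.sum_congr' _ hmin]
        congr 1
    _ ≤ _ := by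
        apply Finset.sum_le_sum_of_subset_of_nonneg
        · intro i hi
          simp only [Finset.mem_filter, Finset.mem_univ, true_and] at *
          omega
        · intro i _ _; exact hnn i

/-- Any sum over a set of card `≤ k` is at most the top-`k` sum (for nonneg `f`). -/
lemma sum_le_topSum {n k : ℕ} (f : Fin n → ℝ) (hnn : ∀ i, 0 ≤ f i)
    (B : Finset (Fin n)) (hB : B.card ≤ k) : ∑ j ∈ B, f j ≤ topSum f k := by
  set σ := Tuple.sort f with hσ
  set φ : Fin n → Fin n := fun j => (σ⁻¹ j).rev with hφ
  have hinj : Function.Injective φ := by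
    intro a b h
    have := Fin.rev_injective h
    simpa using (σ⁻¹).injective this
  have hsum : ∑ j ∈ B, f j = ∑ i ∈ B.image φ, sortDesc f i := by
    rw [Finset.sum_image (fun a _ b _ h => hinj h)]
    apply Finset.sum_congr rfl
    intro j _
    simp [sortDesc, sortAsc, hφ, Fin.rev_rev, hσ]
  rw [hsum]
  exact sum_le_sum_first (sortDesc f) (sortDesc_antitone f) (sortDesc_nonneg f hnn)
    _ (le_trans (le_of_eq (Finset.card_image_of_injective _ hinj)) hB)

/-- The top-`k` sum is realized by an actual subset of indices of card `min k n`,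
consisting of the `min k n` largest entries. -/
lemma topSum_exists {n k : ℕ} (f : Fin n → ℝ) :
    ∃ A : Finset (Fin n), A.card = min k n ∧ topSum f k = ∑ j ∈ A, f j := by
  set σ := Tuple.sort f
  set ψ : Fin n → Fin n := fun i => σ i.rev with hψ
  have hinj : Function.Injective ψ := fun a b h =>
    Fin.rev_injective (σ.injective h)
  refine ⟨(Finset.univ.filter fun i : Fin n => (i : ℕ) < k).image ψ, ?_, ?_⟩
  · rw [Finset.card_image_of_injective _ hinj, card_filter_lt]
  · rw [Finset.sum_image (fun a _ b _ h => hinj h)]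
    rfl

/-- keeping the `m` largest entries of a probability vector and
renormalizing yields a vector that majorizes the original. -/
theorem stmt_13 {n : ℕ} (ρ : Fin n → ℝ)
    (hnn : ∀ i, 0 ≤ ρ i) (hsum : ∑ i, ρ i = 1)
    (m : ℕ) (S : Finset (Fin n)) (hcard : S.card = m)
    (hS : ∀ i ∈ S, ∀ j ∉ S, ρ j ≤ ρ i)
    (hpos : 0 < ∑ j ∈ S, ρ j)
    (ρ' : Fin n → ℝ)
    (hρ' : ρ' = fun i => if i ∈ S then ρ i / ∑ j ∈ S, ρ j else 0) :
    Majorizes ρ' ρ := by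
  set T := ∑ j ∈ S, ρ j with hT
  have hT1 : T ≤ 1 := by
    rw [← hsum]
    exact Finset.sum_le_sum_of_subset_of_nonneg (Finset.subset_univ S)
      (fun i _ _ => hnn i)
  have hnn' : ∀ i, 0 ≤ ρ' i := by
    intro i
    rw [hρ']
    dsimp only
    split
    · exact div_nonneg (hnn i) hpos.le
    · exact le_refl 0
  have hsum' : ∑ i, ρ' i = 1 := by
    rw [hρ']
    rw [Finset.sum_ite_mem, Finset.univ_inter, ← Finset.sum_div, ← hT, div_self hpos.ne']
  have hptwise : ∀ i ∈ S, ρ i ≤ ρ' i := by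
    intro i hi
    rw [hρ']
    simp only [hi, if_true]
    rw [le_div_iff₀ hpos]
    calc ρ i * T ≤ ρ i * 1 := mul_le_mul_of_nonneg_left hT1 (hnn i)
      _ = ρ i := mul_one _
  constructor
  · intro k
    obtain ⟨A, hAcard, hAeq⟩ := topSum_exists (k := k) ρ
    by_cases hmk : min k n ≤ m
    · -- build B ⊆ S with B.card = A.card and ∑_A ρ ≤ ∑_B ρ
      set A1 := A ∩ S with hA1
      set A2 := A \ S with hA2
      have hsplit : A1.card + A2.card = A.card := Finset.card_inter_add_card_sdiff A S
      have hScard : (S \ A).card + A1.card = S.card := by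
        rw [hA1, Finset.inter_comm]
        rw [add_comm]
        exact Finset.card_inter_add_card_sdiff S A
      have hA2le : A2.card ≤ (S \ A).card := by
        have : A.card ≤ S.card := by rw [hAcard, hcard]; exact hmk
        omega
      obtain ⟨C, hCsub, hCcard⟩ := Finset.exists_subset_card_eq hA2le
      have hA2C : ∑ a ∈ A2, ρ a ≤ ∑ c ∈ C, ρ c := by
        have e : {x // x ∈ A2} ≃ {x // x ∈ C} :=
          Finset.equivOfCardEq (by rw [hCcard])
        calc ∑ a ∈ A2, ρ a = ∑ x : {x // x ∈ A2}, ρ x := (Finset.sum_coe_sort A2 ρ).symm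
          _ ≤ ∑ x : {x // x ∈ A2}, ρ (e x) := by
              apply Finset.sum_le_sum
              intro x _
              have hxc : (e x : Fin n) ∈ S := (Finset.mem_sdiff.1 (hCsub (e x).2)).1
              have hxn : (x : Fin n) ∉ S := (Finset.mem_sdiff.1 x.2).2
              exact hS _ hxc _ hxn
          _ = ∑ y : {x // x ∈ C}, ρ y := Equiv.sum_comp e (fun y => ρ (y : Fin n))
          _ = ∑ c ∈ C, ρ c := Finset.sum_coe_sort C ρ
      have hdisj : Disjoint A1 C := by
        apply Finset.disjoint_left.2
        intro x hx hxc
        have : x ∈ S \ A := hCsub hxc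
        exact (Finset.mem_sdiff.1 this).2 (Finset.mem_of_mem_inter_left hx)
      set B := A1 ∪ C with hB
      have hBsub : B ⊆ S := by
        apply Finset.union_subset
        · exact Finset.inter_subset_right
        · exact hCsub.trans (Finset.sdiff_subset)
      have hBcard : B.card = A.card := by
        rw [hB, Finset.card_union_of_disjoint hdisj, hCcard]
        omega
      have step1 : ∑ a ∈ A, ρ a ≤ ∑ b ∈ B, ρ b := by
        have hAsplit : ∑ a ∈ A, ρ a = ∑ a ∈ A1, ρ a + ∑ a ∈ A2, ρ a := by
          rw [hA1, hA2, Finset.sum_inter_add_sum_sdiff]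
        rw [hAsplit, hB, Finset.sum_union hdisj]
        exact add_le_add_right hA2C _
      have step2 : ∑ b ∈ B, ρ b ≤ ∑ b ∈ B, ρ' b :=
        Finset.sum_le_sum fun b hb => hptwise b (hBsub hb)
      have step3 : ∑ b ∈ B, ρ' b ≤ topSum ρ' k := by
        apply sum_le_topSum ρ' hnn'
        rw [hBcard, hAcard]
        exact min_le_left _ _
      rw [hAeq]
      exact le_trans step1 (le_trans step2 step3)
    · push_neg at hmk
      have h1 : topSum ρ k ≤ 1 := by
        rw [hAeq, ← hsum]
        exact Finset.sum_le_sum_of_subset_of_nonneg (Finset.subset_univ A)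
          (fun i _ _ => hnn i)
      have h2 : (1 : ℝ) ≤ topSum ρ' k := by
        rw [← hsum']
        have : ∑ i ∈ Finset.univ, ρ' i = ∑ i ∈ S, ρ' i := by
          apply (Finset.sum_subset (Finset.subset_univ S) ?_).symm
          intro x _ hx
          rw [hρ']
          simp [hx]
        rw [this]
        apply sum_le_topSum ρ' hnn'
        rw [hcard]
        have : m < k := lt_of_lt_of_le hmk (min_le_left _ _)
        omega
      linarith
  · rw [hsum, hsum']
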